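/- Let P₀, P₁, …, P_m be a symmetric Clifford system on ℝ^{2l} with m ≥ 1 and l ≥ 1, and let F(x) = |x|⁴ − 2∑_{i=0}^{m} ⟨P_i x, x⟩² be the associated FKM polynomial. Then F satisfies the second Cartan–Münzner equation for g = 4 with multiplicities (m₁, m₂) = (m, l−m−1): for every x ∈ ℝ^{2l}, ΔF(x) = 8(l − 2m − 1)|x|², where Δ denotes the Euclidean Laplacian (the trace of the Hessian). -/

import Mathlib

open RealInnerProductSpace
open TensorProduct

lemma trace_smulRight' {E : Type*} [AddCommGroup E] [Module ℝ E]
    [Module.Finite ℝ E] [Module.Free ℝ E] (f : E →ₗ[ℝ] ℝ) (b : E) :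
    LinearMap.trace ℝ E (f.smulRight b) = f b := by
  have h : f.smulRight b = dualTensorHom ℝ E E (f ⊗ₜ[ℝ] b) := by
    ext v; simp
  rw [h, LinearMap.trace_eq_contract_apply, contractLeft_apply]

lemma trace_anticomm_zero {E : Type*} [AddCommGroup E] [Module ℝ E]
    [Module.Finite ℝ E] [Module.Free ℝ E] (A B : E →ₗ[ℝ] E)
    (hBB : B ∘ₗ B = LinearMap.id) (hAB : A ∘ₗ B + B ∘ₗ A = 0) :
    LinearMap.trace ℝ E A = 0 := by
  have hBB' : B * B = 1 := hBB
  have h2 : B * A = -(A * B) := by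
    have h : A * B + B * A = 0 := hAB
    exact eq_neg_of_add_eq_zero_right h
  have key : LinearMap.trace ℝ E A = - LinearMap.trace ℝ E A := by
    conv_lhs => rw [show A = A * B * B by rw [mul_assoc, hBB', mul_one]]
    rw [LinearMap.trace_mul_comm]
    have h3 : B * (A * B) = -A := by
      rw [← mul_assoc, h2, neg_mul, mul_assoc, hBB', mul_one]
    rw [h3, map_neg]
  linarith

lemma hinner_deriv {n : ℕ} (A : EuclideanSpace ℝ (Fin n) →ₗ[ℝ] EuclideanSpace ℝ (Fin n))
    (hA : A.IsSymmetric) (y : EuclideanSpace ℝ (Fin n)) :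
    HasFDerivAt (fun z => ⟪A z, z⟫) ((2:ℝ) • (innerSL ℝ (A y))) y := by
  have h1 : HasFDerivAt (fun z => A z) (LinearMap.toContinuousLinearMap A) y := by
    simpa using (LinearMap.toContinuousLinearMap A).hasFDerivAt (x := y)
  have h := h1.inner ℝ (hasFDerivAt_id y)
  refine h.congr_fderiv ?_
  symm
  ext v
  simp only [ContinuousLinearMap.smul_apply, innerSL_apply_apply, ContinuousLinearMap.comp_apply,
    ContinuousLinearMap.prod_apply, fderivInnerCLM_apply, ContinuousLinearMap.coe_id', id_eq,
    LinearMap.coe_toContinuousLinearMap', smul_eq_mul, RCLike.inner_apply, conj_trivial]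
  rw [two_mul]
  congr 1
  rw [real_inner_comm, hA]

lemma trace_big {n k : ℕ} (a : ℝ) (c : EuclideanSpace ℝ (Fin n) →L[ℝ] ℝ)
    (u : EuclideanSpace ℝ (Fin n)) (b : Fin k → ℝ)
    (Q : Fin k → (EuclideanSpace ℝ (Fin n) →ₗ[ℝ] EuclideanSpace ℝ (Fin n)))
    (d : Fin k → (EuclideanSpace ℝ (Fin n) →L[ℝ] ℝ))
    (w : Fin k → EuclideanSpace ℝ (Fin n)) :
    LinearMap.trace ℝ (EuclideanSpace ℝ (Fin n))
      ((a • ContinuousLinearMap.id ℝ (EuclideanSpace ℝ (Fin n)) + c.smulRight u -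
        ∑ i, (b i • LinearMap.toContinuousLinearMap (Q i) +
          (d i).smulRight (w i))).toLinearMap) =
      a * n + c u - ∑ i, (b i * LinearMap.trace ℝ (EuclideanSpace ℝ (Fin n)) (Q i)
        + d i (w i)) := by
  have hco : ((a • ContinuousLinearMap.id ℝ (EuclideanSpace ℝ (Fin n)) + c.smulRight u -
        ∑ i, (b i • LinearMap.toContinuousLinearMap (Q i) +
          (d i).smulRight (w i))).toLinearMap) =
      a • (LinearMap.id : EuclideanSpace ℝ (Fin n) →ₗ[ℝ] EuclideanSpace ℝ (Fin n))
        + (c.toLinearMap).smulRight u -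
        ∑ i, (b i • Q i + ((d i).toLinearMap).smulRight (w i)) := by
    ext v
    simp
  rw [hco, map_sub, map_add, map_sum, map_smul, LinearMap.trace_id, trace_smulRight']
  congr 1
  · congr 1
    · rw [finrank_euclideanSpace]; simp [smul_eq_mul]
  · apply Finset.sum_congr rfl
    intro i _
    rw [map_add, map_smul, trace_smulRight']
    simp [smul_eq_mul]


/-- The Euclidean Laplacian of a real function on an inner product space,
defined as the trace of the Hessian (the derivative of the gradient). -/
noncomputable def euclideanLaplacian {E : Type*} [NormedAddCommGroup E]
    [InnerProductSpace ℝ E] [CompleteSpace E] (F : E → ℝ) (x : E) : ℝ :=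
  LinearMap.trace ℝ E (fderiv ℝ (gradient F) x).toLinearMap

/-- The FKM polynomial of a symmetric Clifford system satisfies the second
Cartan–Münzner equation for `g = 4` with multiplicities `(m₁, m₂) = (m, l - m - 1)`:
`ΔF(x) = 8 (l - 2m - 1) |x|²`. -/
theorem fkm_second_cartan_munzner {l m : ℕ} (hl : 1 ≤ l) (hm : 1 ≤ m)
    (P : Fin (m + 1) →
      (EuclideanSpace ℝ (Fin (2 * l)) →ₗ[ℝ] EuclideanSpace ℝ (Fin (2 * l))))
    (hsymm : ∀ i, (P i).IsSymmetric)
    (hcliff : ∀ i j, P i ∘ₗ P j + P j ∘ₗ P i =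
      if i = j then (2 : ℝ) • (LinearMap.id :
        EuclideanSpace ℝ (Fin (2 * l)) →ₗ[ℝ] EuclideanSpace ℝ (Fin (2 * l))) else 0)
    (F : EuclideanSpace ℝ (Fin (2 * l)) → ℝ)
    (hF : ∀ x, F x = ‖x‖ ^ 4 - 2 * ∑ i, ⟪P i x, x⟫ ^ 2) :
    ∀ x, euclideanLaplacian F x = 8 * ((l : ℝ) - 2 * m - 1) * ‖x‖ ^ 2 := by
    classical
  have hPP : ∀ i (y : EuclideanSpace ℝ (Fin (2 * l))), P i (P i y) = y := by
    intro i y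
    have h := hcliff i i
    rw [if_pos rfl] at h
    have h2 := LinearMap.ext_iff.mp h y
    simp only [LinearMap.add_apply, LinearMap.comp_apply, LinearMap.smul_apply,
      LinearMap.id_apply] at h2
    have h3 : (2:ℝ) • (P i) ((P i) y) = (2:ℝ) • y := (two_smul ℝ _).trans h2
    exact smul_right_injective _ two_ne_zero h3
  have hPsq : ∀ i, P i ∘ₗ P i = LinearMap.id := by
    intro i; ext y; simp [hPP i y]
  have hPnorm : ∀ i (y : EuclideanSpace ℝ (Fin (2 * l))), ⟪P i y, P i y⟫ = ⟪y, y⟫ := by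
    intro i y
    calc ⟪P i y, P i y⟫ = ⟪y, P i (P i y)⟫ := hsymm i y (P i y)
      _ = ⟪y, y⟫ := by rw [hPP]
  have htr : ∀ i, LinearMap.trace ℝ (EuclideanSpace ℝ (Fin (2 * l))) (P i) = 0 := by
    intro i
    haveI : Nontrivial (Fin (m + 1)) :=
      ⟨⟨0, by omega⟩, ⟨1, by omega⟩, by simp [Fin.ext_iff]⟩
    obtain ⟨j, hj⟩ := exists_ne i
    refine trace_anticomm_zero (P i) (P j) (hPsq j) ?_
    have h := hcliff i j
    rwa [if_neg (Ne.symm hj)] at h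
  have hqi : ∀ (y : EuclideanSpace ℝ (Fin (2 * l))) i,
      HasFDerivAt (fun z => ⟪P i z, z⟫) ((2:ℝ) • innerSL ℝ (P i y)) y :=
    fun y i => hinner_deriv (P i) (hsymm i) y
  have hq : ∀ y : EuclideanSpace ℝ (Fin (2 * l)),
      HasFDerivAt (fun z : EuclideanSpace ℝ (Fin (2 * l)) => ⟪z, z⟫)
        ((2:ℝ) • innerSL ℝ y) y := by
    intro y
    have := hinner_deriv (LinearMap.id (R := ℝ) (M := EuclideanSpace ℝ (Fin (2 * l))))
      (fun u v => by simp) y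
    simpa using this
  have hFeq : F = fun z => ⟪z, z⟫ * ⟪z, z⟫ - 2 * ∑ i, ⟪P i z, z⟫ * ⟪P i z, z⟫ := by
    funext z
    rw [hF z, real_inner_self_eq_norm_sq z]
    simp only [pow_two]
    ring
  have hGrad : ∀ y : EuclideanSpace ℝ (Fin (2 * l)), HasGradientAt F
      ((4 * ⟪y, y⟫) • y - ∑ i, (8 * ⟪P i y, y⟫) • P i y) y := by
    intro y
    rw [hasGradientAt_iff_hasFDerivAt]
    rw [hFeq]
    have hD := ((hq y).mul (hq y)).sub
      ((HasFDerivAt.fun_sum (u := Finset.univ)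
        (fun i _ => (hqi y i).mul (hqi y i))).const_mul 2)
    have heq : (InnerProductSpace.toDual ℝ (EuclideanSpace ℝ (Fin (2 * l)))
        ((4 * ⟪y, y⟫) • y - ∑ i, (8 * ⟪P i y, y⟫) • P i y)) =
        (⟪y, y⟫ • (2:ℝ) • innerSL ℝ y + ⟪y, y⟫ • (2:ℝ) • innerSL ℝ y -
          (2:ℝ) • ∑ i, (⟪P i y, y⟫ • (2:ℝ) • innerSL ℝ (P i y) +
            ⟪P i y, y⟫ • (2:ℝ) • innerSL ℝ (P i y))) := by
      ext v
      simp only [InnerProductSpace.toDual_apply_apply, inner_sub_left, real_inner_smul_left,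
        sum_inner, ContinuousLinearMap.coe_sub', Pi.sub_apply, ContinuousLinearMap.add_apply,
        ContinuousLinearMap.smul_apply, innerSL_apply_apply, smul_eq_mul,
        ContinuousLinearMap.coe_smul', Pi.smul_apply, ContinuousLinearMap.coe_sum',
        Finset.sum_apply, Finset.mul_sum]
      rw [Finset.sum_congr rfl (fun i _ => by ring : ∀ i ∈ Finset.univ,
        8 * ⟪P i y, y⟫ * ⟪P i y, v⟫ =
          2 * (⟪P i y, y⟫ * (2 * ⟪P i y, v⟫) + ⟪P i y, y⟫ * (2 * ⟪P i y, v⟫)))]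
      ring
    rw [heq]
    exact hD
  have hgrad_eq : gradient F =
      fun y : EuclideanSpace ℝ (Fin (2 * l)) =>
        (4 * ⟪y, y⟫) • y - ∑ i, (8 * ⟪P i y, y⟫) • P i y :=
    gradient_eq hGrad
  intro x
  have hPi : ∀ i, HasFDerivAt (fun z => P i z) (LinearMap.toContinuousLinearMap (P i)) x := by
    intro i
    simpa using (LinearMap.toContinuousLinearMap (P i)).hasFDerivAt (x := x)
  have hterm1 : HasFDerivAt (fun y : EuclideanSpace ℝ (Fin (2 * l)) => (4 * ⟪y, y⟫) • y)
      ((4 * ⟪x, x⟫) • ContinuousLinearMap.id ℝ (EuclideanSpace ℝ (Fin (2 * l))) +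
        ((4:ℝ) • ((2:ℝ) • innerSL ℝ x)).smulRight x) x :=
    ((hq x).const_mul 4).smul (hasFDerivAt_id x)
  have htermi : ∀ i, HasFDerivAt (fun y => (8 * ⟪P i y, y⟫) • P i y)
      ((8 * ⟪P i x, x⟫) • LinearMap.toContinuousLinearMap (P i) +
        ((8:ℝ) • ((2:ℝ) • innerSL ℝ (P i x))).smulRight (P i x)) x :=
    fun i => ((hqi x i).const_mul 8).smul (hPi i)
  have hG : HasFDerivAt (fun y : EuclideanSpace ℝ (Fin (2 * l)) =>
        (4 * ⟪y, y⟫) • y - ∑ i, (8 * ⟪P i y, y⟫) • P i y)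
      ((4 * ⟪x, x⟫) • ContinuousLinearMap.id ℝ (EuclideanSpace ℝ (Fin (2 * l))) +
        ((4:ℝ) • ((2:ℝ) • innerSL ℝ x)).smulRight x -
       ∑ i, ((8 * ⟪P i x, x⟫) • LinearMap.toContinuousLinearMap (P i) +
        ((8:ℝ) • ((2:ℝ) • innerSL ℝ (P i x))).smulRight (P i x))) x :=
    hterm1.sub (HasFDerivAt.fun_sum (fun i _ => htermi i))
  have hfd : fderiv ℝ (gradient F) x =
      (4 * ⟪x, x⟫) • ContinuousLinearMap.id ℝ (EuclideanSpace ℝ (Fin (2 * l))) +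
        ((4:ℝ) • ((2:ℝ) • innerSL ℝ x)).smulRight x -
       ∑ i, ((8 * ⟪P i x, x⟫) • LinearMap.toContinuousLinearMap (P i) +
        ((8:ℝ) • ((2:ℝ) • innerSL ℝ (P i x))).smulRight (P i x)) := by
    rw [hgrad_eq]; exact hG.fderiv
  rw [euclideanLaplacian, hfd, trace_big]
  have hx : ⟪x, x⟫ = ‖x‖ ^ 2 := real_inner_self_eq_norm_sq x
  have hterm : ∀ i : Fin (m + 1),
      (8 * ⟪P i x, x⟫) * LinearMap.trace ℝ (EuclideanSpace ℝ (Fin (2 * l))) (P i) +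
        ((8:ℝ) • ((2:ℝ) • innerSL ℝ (P i x))) (P i x) = 16 * ‖x‖ ^ 2 := by
    intro i
    rw [htr i]
    simp only [mul_zero, zero_add, ContinuousLinearMap.smul_apply, innerSL_apply_apply,
      smul_eq_mul, RCLike.inner_apply, conj_trivial, hPnorm i x, hx]
    ring
  rw [Finset.sum_congr rfl (fun i _ => hterm i)]
  simp only [ContinuousLinearMap.smul_apply, innerSL_apply_apply, smul_eq_mul, Finset.sum_const,
    Finset.card_univ, Fintype.card_fin, nsmul_eq_mul, hx, RCLike.inner_apply, conj_trivial]
  push_cast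
  ring
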